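/- Let TS=(S,T,→,s₀) be a CEST-system and R a home cover of TS, and let TS̄=(S,T̄,{(s',ᾱ,s) : s –α→ s'},R) be the reversed step transition system with multiple initial states R. Then TS^mixrev is solvable if and only if both TS and TS̄ are solvable. -/

import Mathlib

/-! Common formalization of step transition systems, CEST-systems,
reversing constructions, PT-nets, and solvability. -/

structure STS (S : Type*) (A : Type*) where
  T : Finset A
  tr : S → Multiset A → S → Prop
  init : S

namespace STS

variable {S S' : Type*} {A : Type*}

/-- All transition labels are multisets over the action set `T`. -/
def LabelsIn (X : STS S A) : Prop :=
  ∀ s (α : Multiset A) s', X.tr s α s' → ∀ a ∈ α, a ∈ X.T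

/-- The integer action vector of a step. -/
def stepVec [DecidableEq A] (α : Multiset A) : A → ℤ :=
  fun a => (α.count a : ℤ)

/-- `PathSig X s r v` holds iff there is an undirected path from `s` to `r`
with signature `v`. -/
inductive PathSig [DecidableEq A] (X : STS S A) : S → S → (A → ℤ) → Prop
  | nil (s : S) : PathSig X s s 0
  | fwd {s r r' : S} {α : Multiset A} {v : A → ℤ} :
      PathSig X s r v → X.tr r α r' → PathSig X s r' (v + stepVec α)
  | bwd {s r r' : S} {α : Multiset A} {v : A → ℤ} :
      PathSig X s r v → X.tr r' α r → PathSig X s r' (v - stepVec α)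

/-- The least addition-closed equivalence relating signatures of any two
undirected paths with the same source and target. -/
inductive Bowtie [DecidableEq A] (X : STS S A) : (A → ℤ) → (A → ℤ) → Prop
  | base {s r : S} {v w : A → ℤ} :
      PathSig X s r v → PathSig X s r w → Bowtie X v w
  | refl (v : A → ℤ) : Bowtie X v v
  | symm {v w : A → ℤ} : Bowtie X v w → Bowtie X w v
  | trans {u v w : A → ℤ} : Bowtie X u v → Bowtie X v w → Bowtie X u w
  | add {v w v' w' : A → ℤ} :
      Bowtie X v w → Bowtie X v' w' → Bowtie X (v + v') (w + w')

/-- Constant effect. -/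
def CE [DecidableEq A] (X : STS S A) : Prop :=
  ∀ (s r r' : S) (v w : A → ℤ),
    PathSig X s r v → PathSig X s r' w → Bowtie X v w → r = r'

/-- Reachability by forward transitions. -/
inductive ReachFrom (X : STS S A) : S → S → Prop
  | refl (s : S) : ReachFrom X s s
  | step {s r r' : S} {α : Multiset A} :
      ReachFrom X s r → X.tr r α r' → ReachFrom X s r'

/-- Every state is reachable from the initial state. -/
def REA (X : STS S A) : Prop := ∀ s, X.ReachFrom X.init s

/-- Empty loops. -/
def EL (X : STS S A) : Prop := ∀ s, X.tr s 0 s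

/-- Sequentialisability. -/
def SEQ (X : STS S A) : Prop :=
  ∀ (s : S) (α β : Multiset A), (∃ s', X.tr s (α + β) s') →
    ∃ s', X.tr s α s' ∧ ∃ s'', X.tr s' β s''

/-- A CEST-system: a step transition system satisfying CE, REA, EL and SEQ. -/
def IsCEST [DecidableEq A] (X : STS S A) : Prop :=
  X.LabelsIn ∧ X.CE ∧ X.REA ∧ X.EL ∧ X.SEQ

/-- Step-finiteness: at every state only finitely many steps are enabled. -/
def StepFinite (X : STS S A) : Prop :=
  ∀ s, {α : Multiset A | ∃ s', X.tr s α s'}.Finite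

/-- Retain only transitions whose label has size at most 1. -/
def seqR (X : STS S A) : STS S A :=
  { X with tr := fun s α s' => X.tr s α s' ∧ Multiset.card α ≤ 1 }

/-- Retain only transitions whose label is a set. -/
def setR (X : STS S A) : STS S A :=
  { X with tr := fun s α s' => X.tr s α s' ∧ α.Nodup }

/-- Retain only transitions whose label has support of size at most 1. -/
def spikeR [DecidableEq A] (X : STS S A) : STS S A :=
  { X with tr := fun s α s' => X.tr s α s' ∧ α.toFinset.card ≤ 1 }

variable [DecidableEq A]

/-- `bar` is a proper reversing map for the actions of `X`: reverses are
pairwise distinct and fresh. -/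
def GoodRev (X : STS S A) (bar : A → A) : Prop :=
  Set.InjOn bar ↑X.T ∧ ∀ a ∈ X.T, bar a ∉ X.T

/-- The action set `T ⊎ T̄`. -/
def revT (X : STS S A) (bar : A → A) : Finset A := X.T ∪ X.T.image bar

/-- The direct reverse `TS^rev` (in a CEST-system, `s –α→ s'` means `s' = s⊕α`). -/
def revSTS (X : STS S A) (bar : A → A) : STS S A where
  T := revT X bar
  tr s γ s' := X.tr s γ s' ∨ ∃ α : Multiset A, γ = Multiset.map bar α ∧ X.tr s' α s
  init := X.init

/-- The set reverse `TS^setrev`. -/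
def setrevSTS (X : STS S A) (bar : A → A) : STS S A where
  T := revT X bar
  tr s γ s' := X.tr s γ s' ∨
    ∃ α : Multiset A, γ = Multiset.map bar α ∧ α.Nodup ∧ X.tr s' α s
  init := X.init

/-- The mixed reverse `TS^mixrev`: transitions `(s⊕α, ᾱ+β, s⊕β)` for `s –(α+β)→`. -/
def mixrevSTS (X : STS S A) (bar : A → A) : STS S A where
  T := revT X bar
  tr u γ v := ∃ (s : S) (α β : Multiset A),
      γ = Multiset.map bar α + β ∧ (∃ w, X.tr s (α + β) w) ∧
      X.tr s α u ∧ X.tr s β v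
  init := X.init

/-- `Y` is a split reverse of `X` (w.r.t. reversing map `bar` and the
index-removing map `noidx`). -/
def IsSplitRev (X : STS S A) (bar noidx : A → A) (Y : STS S A) : Prop :=
  Y.init = X.init ∧
  Y.LabelsIn ∧
  X.T ⊆ Y.T ∧
  (∀ a ∈ X.T, noidx a = a) ∧
  Disjoint X.T ((Y.T \ X.T).image noidx) ∧
  Y.SEQ ∧
  Y.T.image noidx = revT X bar ∧
  ∀ (s : S) (γ : Multiset A) (s' : S),
    (∃ δ : Multiset A, Y.tr s δ s' ∧ γ = Multiset.map noidx δ) ↔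
      (revSTS X bar).tr s γ s'

/-- Inclusion with the identity map on states (`⊴`). -/
def SubId (X Y : STS S A) : Prop :=
  X.init = Y.init ∧ X.T ⊆ Y.T ∧
  ∀ s (α : Multiset A) s', X.tr s α s' → Y.tr s α s'

/-- Inclusion (`◁`) via a bijection of states. -/
def Incl (X : STS S A) (Y : STS S' A) : Prop :=
  ∃ ψ : S ≃ S', ψ X.init = Y.init ∧ X.T ⊆ Y.T ∧
    ∀ s (α : Multiset A) s', X.tr s α s' → Y.tr (ψ s) α (ψ s')

/-- Isomorphism of step transition systems. -/
def IsoSTS (X : STS S A) (Y : STS S' A) : Prop :=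
  ∃ ψ : S ≃ S', ψ X.init = Y.init ∧ X.T = Y.T ∧
    ∀ s (α : Multiset A) s', X.tr s α s' ↔ Y.tr (ψ s) α (ψ s')

/-- `TS̄_r`: the reversed system restricted to the states from which `r` is
reachable in `X`, with initial state `r`. -/
def revRestrict (X : STS S A) (bar : A → A) (r : S) :
    STS {s : S // X.ReachFrom s r} A where
  T := X.T.image bar
  tr u γ v := ∃ α : Multiset A, γ = Multiset.map bar α ∧ X.tr v.1 α u.1
  init := ⟨r, ReachFrom.refl r⟩

end STS

/-- A place/transition net. -/
structure PTNet (P : Type*) (A : Type*) where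
  T : Finset A
  pre : P → A → ℕ
  post : A → P → ℕ
  M0 : P → ℕ
  pre_pos : ∀ a ∈ T, ∃ p, 0 < pre p a

namespace PTNet

variable {P A : Type*}

def PRE (N : PTNet P A) (α : Multiset A) (p : P) : ℕ :=
  (α.map fun a => N.pre p a).sum

def POST (N : PTNet P A) (α : Multiset A) (p : P) : ℕ :=
  (α.map fun a => N.post a p).sum

def Enabled (N : PTNet P A) (M : P → ℕ) (α : Multiset A) : Prop :=
  (∀ a ∈ α, a ∈ N.T) ∧ ∀ p, N.PRE α p ≤ M p

def fire (N : PTNet P A) (M : P → ℕ) (α : Multiset A) : P → ℕ :=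
  fun p => M p - N.PRE α p + N.POST α p

inductive Reach (N : PTNet P A) : (P → ℕ) → Prop
  | init : Reach N N.M0
  | step {M : P → ℕ} {α : Multiset A} :
      Reach N M → N.Enabled M α → Reach N (N.fire M α)

/-- The subnet induced by a set of actions (same places, same marking). -/
def restrict [DecidableEq A] (N : PTNet P A) (T' : Finset A) : PTNet P A where
  T := N.T ∩ T'
  pre := N.pre
  post := N.post
  M0 := N.M0
  pre_pos := fun a ha => N.pre_pos a (Finset.mem_of_mem_inter_left ha)

end PTNet

/-- The concurrent reachability graph of a PT-net. -/
def CRG {P A : Type*} (N : PTNet P A) : STS {M : P → ℕ // N.Reach M} A where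
  T := N.T
  tr M α M' := N.Enabled M.1 α ∧ M'.1 = N.fire M.1 α
  init := ⟨N.M0, PTNet.Reach.init⟩

/-- A step transition system is solvable if it is isomorphic to the
concurrent reachability graph of some PT-net. -/
def STSSolvable {S A : Type*} (X : STS S A) : Prop :=
  ∃ (n : ℕ) (N : PTNet (Fin n) A), STS.IsoSTS X (CRG N)

/-- An unmarked PT-net. -/
structure UPTNet (P : Type*) (A : Type*) where
  T : Finset A
  pre : P → A → ℕ
  post : A → P → ℕ
  pre_pos : ∀ a ∈ T, ∃ p, 0 < pre p a

def UPTNet.withM {P A : Type*} (U : UPTNet P A) (M : P → ℕ) : PTNet P A :=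
  ⟨U.T, U.pre, U.post, M, U.pre_pos⟩

/-- Solvability of the reversed system `TS̄` with multiple initial states `R`:
one unmarked PT-net and one map `ψ` solving each `TS̄_r` via `ψ(r)` as the
initial marking. -/
def RevMultiSolvable {S A : Type*} [DecidableEq A] (X : STS S A) (bar : A → A)
    (R : Set S) : Prop :=
  ∃ (n : ℕ) (U : UPTNet (Fin n) A) (ψ : S → Fin n → ℕ),
    ∀ r ∈ R,
      ∃ e : {s : S // X.ReachFrom s r} ≃
              {M : Fin n → ℕ // (U.withM (ψ r)).Reach M},
        (∀ s, (e s).1 = ψ s.1) ∧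
        (X.revRestrict bar r).T = (CRG (U.withM (ψ r))).T ∧
        ∀ s (α : Multiset A) s',
          (X.revRestrict bar r).tr s α s' ↔ (CRG (U.withM (ψ r))).tr (e s) α (e s')

/-- A PT-net with weighted read arcs. -/
structure PTRNet (P : Type*) (A : Type*) where
  T : Finset A
  pre : P → A → ℕ
  post : A → P → ℕ
  read : P → A → Option ℕ
  M0 : P → ℕ
  pre_pos : ∀ a ∈ T, ∃ p, 0 < pre p a

namespace PTRNet

variable {P A : Type*}

def toPTNet (N : PTRNet P A) : PTNet P A := ⟨N.T, N.pre, N.post, N.M0, N.pre_pos⟩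

def Enabled (N : PTRNet P A) (M : P → ℕ) (α : Multiset A) : Prop :=
  N.toPTNet.Enabled M α ∧ ∀ a ∈ α, ∀ p k, N.read p a = some k → M p = k

inductive Reach (N : PTRNet P A) : (P → ℕ) → Prop
  | init : Reach N N.M0
  | step {M : P → ℕ} {α : Multiset A} :
      Reach N M → N.Enabled M α → Reach N (N.toPTNet.fire M α)

end PTRNet

/-- The concurrent reachability graph of a PTR-net. -/
def PTRCRG {P A : Type*} (N : PTRNet P A) : STS {M : P → ℕ // N.Reach M} A where
  T := N.T
  tr M α M' := N.Enabled M.1 α ∧ M'.1 = N.toPTNet.fire M.1 α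
  init := ⟨N.M0, PTRNet.Reach.init⟩

namespace Stmt12Aux

open STS PTNet

variable {S A : Type*} [DecidableEq A]

/-! ### Basic consequences of CEST -/

lemma stepVec_add (α β : Multiset A) :
    STS.stepVec (α + β) = STS.stepVec α + STS.stepVec β := by
  funext a; simp [STS.stepVec]

lemma stepVec_zero : STS.stepVec (0 : Multiset A) = 0 := by
  funext a; simp [STS.stepVec]

lemma det {X : STS S A} (hCE : X.CE) {s s₁ s₂ : S} {α : Multiset A}
    (h1 : X.tr s α s₁) (h2 : X.tr s α s₂) : s₁ = s₂ :=
  hCE s s₁ s₂ _ _ (STS.PathSig.fwd (STS.PathSig.nil s) h1)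
    (STS.PathSig.fwd (STS.PathSig.nil s) h2) (STS.Bowtie.refl _)

lemma tr_zero {X : STS S A} (hCE : X.CE) (hEL : X.EL) {s s' : S}
    (h : X.tr s 0 s') : s' = s :=
  det hCE h (hEL s)

/-- Diamond property: if `s –(α+β)→ w` and `s –α→ u` then `u –β→ w`. -/
lemma diamond {X : STS S A} (hCE : X.CE) (hSEQ : X.SEQ) {s u w : S}
    {α β : Multiset A} (h : X.tr s (α + β) w) (ha : X.tr s α u) :
    X.tr u β w := by
  obtain ⟨s', hs', s'', hs''⟩ := hSEQ s α β ⟨w, h⟩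
  have hu : s' = u := det hCE hs' ha
  subst hu
  have hv : STS.PathSig X s w (0 + STS.stepVec (α + β)) :=
    STS.PathSig.fwd (STS.PathSig.nil s) h
  have hw2 : STS.PathSig X s s'' ((0 + STS.stepVec α) + STS.stepVec β) :=
    STS.PathSig.fwd (STS.PathSig.fwd (STS.PathSig.nil s) hs') hs''
  have hveq : (0 + STS.stepVec (α + β) : A → ℤ)
      = (0 + STS.stepVec α) + STS.stepVec β := by
    simp [stepVec_add, add_assoc]
  have : w = s'' := hCE s w s'' _ _ hv hw2 (hveq ▸ STS.Bowtie.refl _)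
  exact this ▸ hs''

/-! ### Multiset lemmas -/

lemma map_bar_cancel {bar : A → A} {T : Finset A} (hinj : Set.InjOn bar ↑T) :
    ∀ (α α' : Multiset A), (∀ a ∈ α, a ∈ T) → (∀ a ∈ α', a ∈ T) →
      Multiset.map bar α = Multiset.map bar α' → α = α' := by
  intro α
  induction α using Multiset.induction with
  | empty =>
    intro α' _ _ h
    simpa [eq_comm] using (Multiset.map_eq_zero.mp h.symm)
  | cons a α ih =>
    intro α' hα hα' h
    have hmem : bar a ∈ Multiset.map bar α' := by
      rw [← h]; simp
    obtain ⟨a', ha'mem, ha'⟩ := Multiset.mem_map.mp hmem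
    have haa : a' = a := hinj (by exact_mod_cast hα' a' ha'mem)
      (by exact_mod_cast hα a (Multiset.mem_cons_self _ _)) ha'
    subst haa
    have hcons : α' = a' ::ₘ α'.erase a' := (Multiset.cons_erase ha'mem).symm
    rw [hcons, Multiset.map_cons, Multiset.map_cons] at h
    have h' := (Multiset.cons_inj_right (bar a')).mp h
    have := ih (α'.erase a') (fun x hx => hα x (Multiset.mem_cons_of_mem hx))
      (fun x hx => hα' x (Multiset.mem_of_mem_erase hx)) h'
    rw [hcons, this]

/-! ### mixrev transition characterizations -/

variable {X : STS S A} {bar : A → A}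

lemma tr_mixrev (hEL : X.EL) {s s' : S} {γ : Multiset A} (h : X.tr s γ s') :
    (X.mixrevSTS bar).tr s γ s' :=
  ⟨s, 0, γ, by simp, ⟨s', by simpa using h⟩, hEL s, h⟩

lemma mixrev_tr_rev (hEL : X.EL) {u v : S} {α : Multiset A} (h : X.tr v α u) :
    (X.mixrevSTS bar).tr u (Multiset.map bar α) v :=
  ⟨v, α, 0, by simp, ⟨u, by simpa using h⟩, h, hEL v⟩

lemma mixrev_tr_of_T (hX : X.IsCEST) (hg : X.GoodRev bar) {u v : S}
    {γ : Multiset A} (hγ : ∀ a ∈ γ, a ∈ X.T)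
    (h : (X.mixrevSTS bar).tr u γ v) : X.tr u γ v := by
  obtain ⟨hLab, hCE, _, hEL, _⟩ := hX
  obtain ⟨s, α, β, heq, hw, hα, hβ⟩ := h
  have hα0 : α = 0 := by
    by_contra hne
    obtain ⟨a, ha⟩ := Multiset.exists_mem_of_ne_zero hne
    have haT : a ∈ X.T := hLab _ _ _ hα a ha
    have : bar a ∈ γ := by
      rw [heq]
      exact Multiset.mem_add.mpr (Or.inl (Multiset.mem_map_of_mem bar ha))
    exact hg.2 a haT (hγ _ this)
  subst hα0
  have hsu : u = s := tr_zero hCE hEL hα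
  subst hsu
  simp only [Multiset.map_zero, zero_add] at heq
  exact heq ▸ hβ

lemma mixrev_tr_of_bar (hX : X.IsCEST) (hg : X.GoodRev bar) {u v : S}
    {γ : Multiset A} (hγ : ∀ c ∈ γ, c ∈ X.T.image bar)
    (h : (X.mixrevSTS bar).tr u γ v) :
    ∃ α : Multiset A, γ = Multiset.map bar α ∧ X.tr v α u := by
  obtain ⟨hLab, hCE, _, hEL, _⟩ := hX
  obtain ⟨s, α, β, heq, hw, hα, hβ⟩ := h
  have hβ0 : β = 0 := by
    by_contra hne
    obtain ⟨b, hb⟩ := Multiset.exists_mem_of_ne_zero hne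
    have hbT : b ∈ X.T := hLab _ _ _ hβ b hb
    have : b ∈ γ := by
      rw [heq]; exact Multiset.mem_add.mpr (Or.inr hb)
    obtain ⟨a, haT, hab⟩ := Finset.mem_image.mp (hγ _ this)
    exact hg.2 a haT (hab ▸ hbT)
  subst hβ0
  have hsv : v = s := tr_zero hCE hEL hβ
  subst hsv
  exact ⟨α, by simpa using heq, hα⟩

omit [DecidableEq A] in
lemma reachFrom_trans {X : STS S A} {a b c : S}
    (h1 : X.ReachFrom a b) (h2 : X.ReachFrom b c) : X.ReachFrom a c := by
  induction h2 with
  | refl => exact h1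
  | step _ htr ih => exact STS.ReachFrom.step ih htr

/-! ### PTNet basics -/

section Nets

variable {P A : Type*}

lemma PRE_add (N : PTNet P A) (α β : Multiset A) (p : P) :
    N.PRE (α + β) p = N.PRE α p + N.PRE β p := by
  simp [PTNet.PRE]

lemma POST_add (N : PTNet P A) (α β : Multiset A) (p : P) :
    N.POST (α + β) p = N.POST α p + N.POST β p := by
  simp [PTNet.POST]

lemma Enabled_restrict [DecidableEq A] (N : PTNet P A) (T' : Finset A) (M : P → ℕ)
    (α : Multiset A) :
    (N.restrict T').Enabled M α ↔ N.Enabled M α ∧ ∀ a ∈ α, a ∈ T' := by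
  constructor
  · rintro ⟨h1, h2⟩
    exact ⟨⟨fun a ha => (Finset.mem_inter.mp (h1 a ha)).1, h2⟩,
      fun a ha => (Finset.mem_inter.mp (h1 a ha)).2⟩
  · rintro ⟨⟨h1, h2⟩, h3⟩
    exact ⟨fun a ha => Finset.mem_inter.mpr ⟨h1 a ha, h3 a ha⟩, h2⟩

lemma fire_restrict [DecidableEq A] (N : PTNet P A) (T' : Finset A)
    (M : P → ℕ) (α : Multiset A) :
    (N.restrict T').fire M α = N.fire M α := rfl

lemma Enabled_withM (U : UPTNet P A) (M0 M : P → ℕ) (α : Multiset A) :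
    (U.withM M0).Enabled M α ↔
      ((∀ a ∈ α, a ∈ U.T) ∧ ∀ p, (U.withM M0).PRE α p ≤ M p) := Iff.rfl

lemma reach_withM_trans (U : UPTNet P A) {M0 M1 M2 : P → ℕ}
    (h2 : (U.withM M1).Reach M2) (h1 : (U.withM M0).Reach M1) :
    (U.withM M0).Reach M2 := by
  induction h2 with
  | init => exact h1
  | step _ hen ih => exact PTNet.Reach.step ih hen

/-- Transport of a net along a bijection of places. -/
lemma crg_transport {P₁ P₂ : Type*} (e : P₁ ≃ P₂) (N : PTNet P₁ A) :
    ∃ N' : PTNet P₂ A, STS.IsoSTS (CRG N) (CRG N') := by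
  classical
  have hpos : ∀ a ∈ N.T, ∃ p : P₂, 0 < N.pre (e.symm p) a := by
    intro a ha
    obtain ⟨p, hp⟩ := N.pre_pos a ha
    exact ⟨e p, by simpa using hp⟩
  set N' : PTNet P₂ A := ⟨N.T, fun p a => N.pre (e.symm p) a,
    fun a p => N.post a (e.symm p), fun p => N.M0 (e.symm p), hpos⟩ with hN'
  refine ⟨N', ?_⟩
  have hPRE : ∀ (α : Multiset A) (p : P₂), N'.PRE α p = N.PRE α (e.symm p) :=
    fun α p => rfl
  have hPOST : ∀ (α : Multiset A) (p : P₂), N'.POST α p = N.POST α (e.symm p) :=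
    fun α p => rfl
  have hEn : ∀ (M : P₁ → ℕ) (α : Multiset A),
      N'.Enabled (fun p => M (e.symm p)) α ↔ N.Enabled M α := by
    intro M α
    constructor
    · rintro ⟨h1, h2⟩
      refine ⟨h1, fun p => ?_⟩
      have := h2 (e p)
      simpa [hPRE] using this
    · rintro ⟨h1, h2⟩
      exact ⟨h1, fun p => by simpa [hPRE] using h2 (e.symm p)⟩
  have hfire : ∀ (M : P₁ → ℕ) (α : Multiset A),
      N'.fire (fun p => M (e.symm p)) α = fun p => N.fire M α (e.symm p) := by
    intro M α; funext p; rfl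
  have hfwd : ∀ M, N.Reach M → N'.Reach (fun p => M (e.symm p)) := by
    intro M h
    induction h with
    | init => exact PTNet.Reach.init
    | @step M α hr hen ih =>
      have : (fun p => N.fire M α (e.symm p))
          = N'.fire (fun p => M (e.symm p)) α := (hfire M α).symm
      rw [this]
      exact PTNet.Reach.step ih ((hEn _ _).mpr hen)
  have hbwd : ∀ M', N'.Reach M' → ∃ M, N.Reach M ∧ (fun p => M (e.symm p)) = M' := by
    intro M' h
    induction h with
    | init => exact ⟨N.M0, PTNet.Reach.init, rfl⟩
    | @step M' α hr hen ih =>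
      obtain ⟨M, hM, hMe⟩ := ih
      subst hMe
      exact ⟨N.fire M α, PTNet.Reach.step hM ((hEn _ _).mp hen), (hfire _ _).symm⟩
  have hinj : Function.Injective (fun (M : P₁ → ℕ) => fun p => M (e.symm p)) := by
    intro M M' h
    funext p
    have := congrFun h (e p)
    simpa using this
  refine ⟨Equiv.ofBijective
    (fun M => ⟨fun p => M.1 (e.symm p), hfwd M.1 M.2⟩) ⟨?_, ?_⟩, ?_, rfl, ?_⟩
  · intro M M' h
    exact Subtype.ext (hinj (congrArg Subtype.val h))
  · rintro ⟨M', hM'⟩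
    obtain ⟨M, hM, hMe⟩ := hbwd M' hM'
    exact ⟨⟨M, hM⟩, Subtype.ext hMe⟩
  · exact Subtype.ext rfl
  · intro M α M'
    simp only [CRG, Equiv.ofBijective_apply]
    constructor
    · rintro ⟨h1, h2⟩
      refine ⟨(hEn _ _).mpr h1, ?_⟩
      change (fun p => M'.1 (e.symm p)) = N'.fire (fun p => M.1 (e.symm p)) α
      rw [hfire]
      funext p; exact congrFun h2 (e.symm p)
    · rintro ⟨h1, h2⟩
      refine ⟨(hEn _ _).mp h1, ?_⟩
      change (fun p => M'.1 (e.symm p)) = N'.fire (fun p => M.1 (e.symm p)) α at h2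
      rw [hfire] at h2
      funext p
      have := congrFun h2 (e p)
      simpa using this

lemma isoSTS_trans {S₁ S₂ S₃ : Type*} {X : STS S₁ A} {Y : STS S₂ A}
    {Z : STS S₃ A} (h1 : STS.IsoSTS X Y) (h2 : STS.IsoSTS Y Z) :
    STS.IsoSTS X Z := by
  obtain ⟨ψ, hi, hT, htr⟩ := h1
  obtain ⟨φ, hi', hT', htr'⟩ := h2
  exact ⟨ψ.trans φ, by simp [hi, hi'], hT.trans hT',
    fun s α s' => (htr s α s').trans (htr' _ α _)⟩

end Nets

/-! ### Forward direction -/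

lemma forward_dir {S A : Type*} [DecidableEq A] (X : STS S A) (bar : A → A)
    (hX : X.IsCEST) (hg : X.GoodRev bar)
    (R : Set S) (hR : ∀ s, ∃ r ∈ R, X.ReachFrom s r)
    (h : STSSolvable (X.mixrevSTS bar)) :
    STSSolvable X ∧ RevMultiSolvable X bar R := by
  obtain ⟨hLab, hCE, hREA, hEL, hSEQ⟩ := hX
  obtain ⟨n, N, ψ, hinit, hT, htr⟩ := h
  have hinit' : (ψ X.init).1 = N.M0 := congrArg Subtype.val hinit
  have hT' : X.T ∪ X.T.image bar = N.T := hT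
  have hTX : X.T ⊆ N.T := by
    rw [← hT']; exact Finset.subset_union_left
  have hTbar : X.T.image bar ⊆ N.T := by
    rw [← hT']; exact Finset.subset_union_right
  constructor
  · -- X is solvable, via the restriction of N to X.T
    set N₁ : PTNet (Fin n) A := N.restrict X.T with hN₁
    have reach1 : ∀ s, N₁.Reach (ψ s).1 := by
      intro s
      induction hREA s with
      | refl =>
        rw [hinit']
        exact PTNet.Reach.init
      | @step r s α hr htr' ih =>
        have hm : (X.mixrevSTS bar).tr r α s := tr_mixrev hEL htr'
        obtain ⟨hen, hfir⟩ := (htr r α s).mp hm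
        have hen₁ : N₁.Enabled (ψ r).1 α :=
          (Enabled_restrict N X.T _ α).mpr ⟨hen, fun a ha => hLab _ _ _ htr' a ha⟩
        have : N₁.Reach (N₁.fire (ψ r).1 α) := PTNet.Reach.step ih hen₁
        rwa [fire_restrict, ← hfir] at this
    have reach1' : ∀ M, N₁.Reach M → ∃ s, (ψ s).1 = M := by
      intro M hM
      induction hM with
      | init => exact ⟨X.init, hinit'⟩
      | @step M α hr hen ih =>
        obtain ⟨s, hs⟩ := ih
        subst hs
        obtain ⟨henN, hlab⟩ := (Enabled_restrict N X.T _ α).mp hen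
        obtain ⟨s', hs'⟩ := ψ.surjective
          ⟨N.fire (ψ s).1 α, PTNet.Reach.step (ψ s).2 henN⟩
        exact ⟨s', congrArg Subtype.val hs'⟩
    have hbij : Function.Bijective
        (fun s : S => (⟨(ψ s).1, reach1 s⟩ : {M // N₁.Reach M})) := by
      constructor
      · intro s s' hss
        have h' := congrArg Subtype.val hss
        exact ψ.injective (Subtype.ext h')
      · rintro ⟨M, hM⟩
        obtain ⟨s, hs⟩ := reach1' M hM
        exact ⟨s, Subtype.ext hs⟩
    refine ⟨n, N₁, Equiv.ofBijective _ hbij, Subtype.ext hinit', ?_, ?_⟩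
    · -- T equality
      show X.T = N.T ∩ X.T
      ext a
      simp only [Finset.mem_inter]
      exact ⟨fun ha => ⟨hTX ha, ha⟩, fun ha => ha.2⟩
    · intro s α s'
      constructor
      · intro hXtr
        obtain ⟨hen, hfir⟩ := (htr s α s').mp (tr_mixrev hEL hXtr)
        exact ⟨(Enabled_restrict N X.T _ α).mpr
          ⟨hen, fun a ha => hLab _ _ _ hXtr a ha⟩, hfir⟩
      · rintro ⟨hen₁, hfir⟩
        obtain ⟨henN, hlab⟩ := (Enabled_restrict N X.T _ α).mp hen₁
        have hm : (X.mixrevSTS bar).tr s α s' := (htr s α s').mpr ⟨henN, hfir⟩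
        exact mixrev_tr_of_T ⟨hLab, hCE, hREA, hEL, hSEQ⟩ hg hlab hm
  · -- the reversed system is solvable
    refine ⟨n, ⟨N.T ∩ X.T.image bar, N.pre, N.post,
      fun a ha => N.pre_pos a (Finset.mem_of_mem_inter_left ha)⟩,
      fun s => (ψ s).1, ?_⟩
    intro r hr
    set U : UPTNet (Fin n) A := ⟨N.T ∩ X.T.image bar, N.pre, N.post,
      fun a ha => N.pre_pos a (Finset.mem_of_mem_inter_left ha)⟩ with hU
    have hUbar : ∀ {α : Multiset A} {s s' : S}, X.tr s α s' →
        ∀ c ∈ Multiset.map bar α, c ∈ U.T := by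
      intro α s s' hXtr c hc
      obtain ⟨a, ha, hac⟩ := Multiset.mem_map.mp hc
      have haT : a ∈ X.T := hLab _ _ _ hXtr a ha
      refine Finset.mem_inter.mpr ⟨?_, hac ▸ Finset.mem_image_of_mem bar haT⟩
      exact hTbar (hac ▸ Finset.mem_image_of_mem bar haT)
    have reach2 : ∀ s, X.ReachFrom s r → (U.withM (ψ r).1).Reach (ψ s).1 := by
      intro s hs
      clear hr
      induction hs with
      | refl => exact PTNet.Reach.init
      | @step r₁ r₂ α h1 htr' ih =>
        refine reach_withM_trans U ih ?_
        obtain ⟨hen, hfir⟩ := (htr r₂ (Multiset.map bar α) r₁).mp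
          (mixrev_tr_rev hEL htr')
        have henU : (U.withM (ψ r₂).1).Enabled (ψ r₂).1 (Multiset.map bar α) :=
          ⟨hUbar htr', hen.2⟩
        have : (U.withM (ψ r₂).1).Reach
            ((U.withM (ψ r₂).1).fire (ψ r₂).1 (Multiset.map bar α)) :=
          PTNet.Reach.step PTNet.Reach.init henU
        rwa [show (U.withM (ψ r₂).1).fire (ψ r₂).1 (Multiset.map bar α)
          = N.fire (ψ r₂).1 (Multiset.map bar α) from rfl, ← hfir] at this
    have reach2' : ∀ M, (U.withM (ψ r).1).Reach M →
        ∃ s, X.ReachFrom s r ∧ (ψ s).1 = M := by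
      intro M hM
      induction hM with
      | init => exact ⟨r, STS.ReachFrom.refl r, rfl⟩
      | @step M γ hr2 hen ih =>
        obtain ⟨s, hsr, hs⟩ := ih
        subst hs
        have henN : N.Enabled (ψ s).1 γ :=
          ⟨fun a ha => (Finset.mem_inter.mp (hen.1 a ha)).1, hen.2⟩
        obtain ⟨s', hs'⟩ := ψ.surjective
          ⟨N.fire (ψ s).1 γ, PTNet.Reach.step (ψ s).2 henN⟩
        have hm : (X.mixrevSTS bar).tr s γ s' :=
          (htr s γ s').mpr ⟨henN, (congrArg Subtype.val hs').symm ▸ rfl⟩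
        obtain ⟨α, hγeq, hXtr⟩ := mixrev_tr_of_bar ⟨hLab, hCE, hREA, hEL, hSEQ⟩ hg
          (fun c hc => (Finset.mem_inter.mp (hen.1 c hc)).2) hm
        refine ⟨s', reachFrom_trans
          (STS.ReachFrom.step (STS.ReachFrom.refl s') hXtr) hsr,
          congrArg Subtype.val hs'⟩
    have hbij : Function.Bijective
        (fun u : {s : S // X.ReachFrom s r} =>
          (⟨(ψ u.1).1, reach2 u.1 u.2⟩ :
            {M // (U.withM (ψ r).1).Reach M})) := by
      constructor
      · intro u v huv
        have h' := congrArg Subtype.val huv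
        exact Subtype.ext (ψ.injective (Subtype.ext h'))
      · rintro ⟨M, hM⟩
        obtain ⟨s, hsr, hs⟩ := reach2' M hM
        exact ⟨⟨s, hsr⟩, Subtype.ext hs⟩
    refine ⟨Equiv.ofBijective _ hbij, fun s => rfl, ?_, ?_⟩
    · -- T equality
      show X.T.image bar = N.T ∩ X.T.image bar
      ext a
      simp only [Finset.mem_inter]
      exact ⟨fun ha => ⟨hTbar ha, ha⟩, fun ha => ha.2⟩
    · intro u γ v
      constructor
      · rintro ⟨α, hγeq, hXtr⟩
        subst hγeq
        obtain ⟨hen, hfir⟩ := (htr u.1 (Multiset.map bar α) v.1).mp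
          (mixrev_tr_rev hEL hXtr)
        exact ⟨⟨hUbar hXtr, hen.2⟩, hfir⟩
      · rintro ⟨hen, hfir⟩
        have henN : N.Enabled (ψ u.1).1 γ :=
          ⟨fun a ha => (Finset.mem_inter.mp (hen.1 a ha)).1, hen.2⟩
        have hm : (X.mixrevSTS bar).tr u.1 γ v.1 :=
          (htr u.1 γ v.1).mpr ⟨henN, hfir⟩
        exact mixrev_tr_of_bar ⟨hLab, hCE, hREA, hEL, hSEQ⟩ hg
          (fun c hc => (Finset.mem_inter.mp (hen.1 c hc)).2) hm

/-! ### Backward direction -/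

lemma backward_dir {S A : Type*} [DecidableEq A] (X : STS S A) (bar : A → A)
    (hX : X.IsCEST) (hg : X.GoodRev bar)
    (R : Set S) (hR : ∀ s, ∃ r ∈ R, X.ReachFrom s r)
    (h1 : STSSolvable X) (h2 : RevMultiSolvable X bar R) :
    STSSolvable (X.mixrevSTS bar) := by
  obtain ⟨hLab, hCE, hREA, hEL, hSEQ⟩ := hX
  obtain ⟨n₁, N₁, ψ₁, hi₁, hT₁, htr₁⟩ := h1
  obtain ⟨n₂, U, ψ₂, hU⟩ := h2
  have hT₁' : X.T = N₁.T := hT₁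
  have hi₁' : (ψ₁ X.init).1 = N₁.M0 := congrArg Subtype.val hi₁
  -- an inverse for `bar` on `X.T`
  have hibex : ∃ ib : A → A, ∀ a ∈ X.T, ib (bar a) = a := by
    refine ⟨fun c => if h : ∃ a ∈ X.T, bar a = c then h.choose else c, ?_⟩
    intro a ha
    have hex : ∃ a' ∈ X.T, bar a' = bar a := ⟨a, ha, rfl⟩
    simp only [dif_pos hex]
    obtain ⟨h1', h2'⟩ := hex.choose_spec
    exact hg.1 (by exact_mod_cast h1') (by exact_mod_cast ha) h2'
  obtain ⟨ib, hib⟩ := hibex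
  -- the action set of U
  obtain ⟨r₀, hr₀R, -⟩ := hR X.init
  obtain ⟨e₀, -, hT₀, -⟩ := hU r₀ hr₀R
  have hUT : X.T.image bar = U.T := hT₀
  -- an unmarked copy of U, for enabledness and firing
  set W : PTNet (Fin n₂) A := U.withM (fun _ => 0) with hW
  -- reverse steps in U
  have L1 : ∀ {s s' : S} {α : Multiset A}, X.tr s α s' →
      W.Enabled (ψ₂ s') (Multiset.map bar α) ∧
      ψ₂ s = W.fire (ψ₂ s') (Multiset.map bar α) := by
    intro s s' α h
    obtain ⟨r, hrR, hs'r⟩ := hR s'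
    have hsr : X.ReachFrom s r :=
      reachFrom_trans (STS.ReachFrom.step (STS.ReachFrom.refl s) h) hs'r
    obtain ⟨e, he, hTe, htre⟩ := hU r hrR
    have hrtr : (X.revRestrict bar r).tr ⟨s', hs'r⟩ (Multiset.map bar α)
        ⟨s, hsr⟩ := ⟨α, rfl, h⟩
    obtain ⟨hen, hfir⟩ := (htre _ _ _).mp hrtr
    rw [he ⟨s', hs'r⟩] at hen hfir
    rw [he ⟨s, hsr⟩] at hfir
    exact ⟨hen, hfir⟩
  have L2 : ∀ (u : S) (γ : Multiset A), W.Enabled (ψ₂ u) γ →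
      ∃ (s : S) (α : Multiset A), γ = Multiset.map bar α ∧ X.tr s α u ∧
        ψ₂ s = W.fire (ψ₂ u) γ := by
    intro u γ hen
    obtain ⟨r, hrR, hur⟩ := hR u
    obtain ⟨e, he, hTe, htre⟩ := hU r hrR
    have hen' : (U.withM (ψ₂ r)).Enabled (e ⟨u, hur⟩).1 γ := by
      rw [he]; exact hen
    have hreach : (U.withM (ψ₂ r)).Reach
        ((U.withM (ψ₂ r)).fire (e ⟨u, hur⟩).1 γ) :=
      PTNet.Reach.step (e ⟨u, hur⟩).2 hen'
    obtain ⟨v', hv'⟩ := e.surjective ⟨_, hreach⟩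
    have hcrg : (CRG (U.withM (ψ₂ r))).tr (e ⟨u, hur⟩) γ (e v') :=
      ⟨hen', by rw [hv']⟩
    obtain ⟨α, hγ, htr'⟩ := (htre _ _ _).mpr hcrg
    refine ⟨v'.1, α, hγ, htr', ?_⟩
    have hfir : (e v').1 = (U.withM (ψ₂ r)).fire (e ⟨u, hur⟩).1 γ := by rw [hv']
    rw [he v', he ⟨u, hur⟩] at hfir
    exact hfir
  -- existence of forward steps from N₁-enabledness
  have L4 : ∀ (s : S) (γ : Multiset A), N₁.Enabled (ψ₁ s).1 γ →
      ∃ s', X.tr s γ s' := by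
    intro s γ hen
    obtain ⟨s', hs'⟩ := ψ₁.surjective
      ⟨N₁.fire (ψ₁ s).1 γ, PTNet.Reach.step (ψ₁ s).2 hen⟩
    exact ⟨s', (htr₁ s γ s').mpr ⟨hen, congrArg Subtype.val hs'⟩⟩
  -- the combined net
  have hpos : ∀ c ∈ X.T ∪ X.T.image bar, ∃ p : Fin n₁ ⊕ Fin n₂,
      0 < Sum.elim
        (fun q => if c ∈ X.T then N₁.pre q c else N₁.post (ib c) q)
        (fun p₂ => if c ∈ X.T then U.post (bar c) p₂ else U.pre p₂ c) p := by
    intro c hc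
    rcases Finset.mem_union.mp hc with hcT | hcI
    · obtain ⟨q, hq⟩ := N₁.pre_pos c (hT₁' ▸ hcT)
      exact ⟨Sum.inl q, by simp only [Sum.elim_inl, if_pos hcT]; exact hq⟩
    · have hcnT : c ∉ X.T := by
        obtain ⟨b, hb, hbc⟩ := Finset.mem_image.mp hcI
        exact hbc ▸ hg.2 b hb
      obtain ⟨p, hp⟩ := U.pre_pos c (hUT ▸ hcI)
      exact ⟨Sum.inr p, by simp only [Sum.elim_inr, if_neg hcnT]; exact hp⟩
  set μ : S → (Fin n₁ ⊕ Fin n₂) → ℕ :=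
    fun s => Sum.elim (ψ₁ s).1 (ψ₂ s) with hμ
  set NS : PTNet (Fin n₁ ⊕ Fin n₂) A :=
    ⟨X.T ∪ X.T.image bar,
     fun p c => Sum.elim
        (fun q => if c ∈ X.T then N₁.pre q c else N₁.post (ib c) q)
        (fun p₂ => if c ∈ X.T then U.post (bar c) p₂ else U.pre p₂ c) p,
     fun c p => Sum.elim
        (fun q => if c ∈ X.T then N₁.post c q else N₁.pre q (ib c))
        (fun p₂ => if c ∈ X.T then U.pre p₂ (bar c) else U.post c p₂) p,
     μ X.init, hpos⟩ with hNS
  have μinj : Function.Injective μ := by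
    intro s s' hss
    refine ψ₁.injective (Subtype.ext (funext fun q => ?_))
    exact congrFun hss (Sum.inl q)
  -- PRE/POST computations
  have mapsum : ∀ (α : Multiset A) (f g : A → ℕ), (∀ a ∈ α, f a = g a) →
      (α.map f).sum = (α.map g).sum :=
    fun α f g h => congrArg Multiset.sum (Multiset.map_congr rfl h)
  have PREinl : ∀ (α β : Multiset A), (∀ a ∈ α, a ∈ X.T) → (∀ b ∈ β, b ∈ X.T) →
      ∀ q, NS.PRE (Multiset.map bar α + β) (Sum.inl q)
        = N₁.POST α q + N₁.PRE β q := by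
    intro α β hα hβ q
    rw [PRE_add]
    congr 1
    · show ((Multiset.map bar α).map fun c => NS.pre (Sum.inl q) c).sum
        = (α.map fun a => N₁.post a q).sum
      rw [Multiset.map_map]
      refine mapsum α _ _ fun a ha => ?_
      show (if bar a ∈ X.T then N₁.pre q (bar a) else N₁.post (ib (bar a)) q)
        = N₁.post a q
      rw [if_neg (hg.2 a (hα a ha)), hib a (hα a ha)]
    · refine mapsum β _ _ fun b hb => ?_
      show (if b ∈ X.T then N₁.pre q b else N₁.post (ib b) q) = N₁.pre q b
      rw [if_pos (hβ b hb)]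
  have POSTinl : ∀ (α β : Multiset A), (∀ a ∈ α, a ∈ X.T) → (∀ b ∈ β, b ∈ X.T) →
      ∀ q, NS.POST (Multiset.map bar α + β) (Sum.inl q)
        = N₁.PRE α q + N₁.POST β q := by
    intro α β hα hβ q
    rw [POST_add]
    congr 1
    · show ((Multiset.map bar α).map fun c => NS.post c (Sum.inl q)).sum
        = (α.map fun a => N₁.pre q a).sum
      rw [Multiset.map_map]
      refine mapsum α _ _ fun a ha => ?_
      show (if bar a ∈ X.T then N₁.post (bar a) q else N₁.pre q (ib (bar a)))
        = N₁.pre q a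
      rw [if_neg (hg.2 a (hα a ha)), hib a (hα a ha)]
    · refine mapsum β _ _ fun b hb => ?_
      show (if b ∈ X.T then N₁.post b q else N₁.pre q (ib b)) = N₁.post b q
      rw [if_pos (hβ b hb)]
  have PREinr : ∀ (α β : Multiset A), (∀ a ∈ α, a ∈ X.T) → (∀ b ∈ β, b ∈ X.T) →
      ∀ p, NS.PRE (Multiset.map bar α + β) (Sum.inr p)
        = W.PRE (Multiset.map bar α) p + W.POST (Multiset.map bar β) p := by
    intro α β hα hβ p
    rw [PRE_add]
    congr 1
    · refine mapsum (Multiset.map bar α) _ _ fun c hc => ?_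
      obtain ⟨a, ha, hac⟩ := Multiset.mem_map.mp hc
      have : c ∉ X.T := hac ▸ hg.2 a (hα a ha)
      show (if c ∈ X.T then U.post (bar c) p else U.pre p c) = U.pre p c
      rw [if_neg this]
    · show (β.map fun c => NS.pre (Sum.inr p) c).sum
        = ((Multiset.map bar β).map fun c => W.post c p).sum
      rw [Multiset.map_map]
      refine mapsum β _ _ fun b hb => ?_
      show (if b ∈ X.T then U.post (bar b) p else U.pre p b) = U.post (bar b) p
      rw [if_pos (hβ b hb)]
  have POSTinr : ∀ (α β : Multiset A), (∀ a ∈ α, a ∈ X.T) → (∀ b ∈ β, b ∈ X.T) →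
      ∀ p, NS.POST (Multiset.map bar α + β) (Sum.inr p)
        = W.POST (Multiset.map bar α) p + W.PRE (Multiset.map bar β) p := by
    intro α β hα hβ p
    rw [POST_add]
    congr 1
    · refine mapsum (Multiset.map bar α) _ _ fun c hc => ?_
      obtain ⟨a, ha, hac⟩ := Multiset.mem_map.mp hc
      have : c ∉ X.T := hac ▸ hg.2 a (hα a ha)
      show (if c ∈ X.T then U.pre p (bar c) else U.post c p) = U.post c p
      rw [if_neg this]
    · show (β.map fun c => NS.post c (Sum.inr p)).sum
        = ((Multiset.map bar β).map fun c => W.pre p c).sum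
      rw [Multiset.map_map]
      refine mapsum β _ _ fun b hb => ?_
      show (if b ∈ X.T then U.pre p (bar b) else U.post b p) = U.pre p (bar b)
      rw [if_pos (hβ b hb)]
  -- the forward characterization of mixrev transitions
  have C1 : ∀ {u v : S} {γ : Multiset A}, (X.mixrevSTS bar).tr u γ v →
      NS.Enabled (μ u) γ ∧ μ v = NS.fire (μ u) γ := by
    rintro u v γ ⟨s, α, β, hγ, ⟨w, hw⟩, hα, hβ⟩
    subst hγ
    have hαT : ∀ a ∈ α, a ∈ X.T := hLab _ _ _ hα
    have hβT : ∀ b ∈ β, b ∈ X.T := hLab _ _ _ hβ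
    have hw' : X.tr s (β + α) w := by rwa [add_comm]
    have huw : X.tr u β w := diamond hCE hSEQ hw hα
    have hvw : X.tr v α w := diamond hCE hSEQ hw' hβ
    obtain ⟨hen1, hfir1⟩ := (htr₁ s (α + β) w).mp hw
    obtain ⟨hen2, hfir2⟩ := (htr₁ s α u).mp hα
    obtain ⟨hen3, hfir3⟩ := (htr₁ s β v).mp hβ
    obtain ⟨henW1, hfirW1⟩ := L1 hw
    obtain ⟨henW2, hfirW2⟩ := L1 huw
    obtain ⟨henW3, hfirW3⟩ := L1 hvw
    have hlabels : ∀ c ∈ Multiset.map bar α + β, c ∈ NS.T := by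
      intro c hc
      rcases Multiset.mem_add.mp hc with hc | hc
      · obtain ⟨a, ha, hac⟩ := Multiset.mem_map.mp hc
        exact Finset.mem_union_right _
          (hac ▸ Finset.mem_image_of_mem bar (hαT a ha))
      · exact Finset.mem_union_left _ (hβT c hc)
    constructor
    · refine ⟨hlabels, ?_⟩
      rintro (q | p)
      · rw [PREinl α β hαT hβT q]
        have e1 : (ψ₁ u).1 q = (ψ₁ s).1 q - N₁.PRE α q + N₁.POST α q :=
          congrFun hfir2 q
        have e2 : N₁.PRE α q ≤ (ψ₁ s).1 q := hen2.2 q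
        have e3 : N₁.PRE α q + N₁.PRE β q ≤ (ψ₁ s).1 q := by
          have := hen1.2 q; rwa [PRE_add] at this
        show N₁.POST α q + N₁.PRE β q ≤ (ψ₁ u).1 q
        omega
      · rw [PREinr α β hαT hβT p]
        have e1 : ψ₂ u p = ψ₂ w p - W.PRE (Multiset.map bar β) p
            + W.POST (Multiset.map bar β) p := congrFun hfirW2 p
        have e2 : W.PRE (Multiset.map bar β) p ≤ ψ₂ w p := henW2.2 p
        have e3 : W.PRE (Multiset.map bar α) p + W.PRE (Multiset.map bar β) p
            ≤ ψ₂ w p := by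
          have := henW1.2 p; rwa [Multiset.map_add, PRE_add] at this
        show W.PRE (Multiset.map bar α) p + W.POST (Multiset.map bar β) p
          ≤ ψ₂ u p
        omega
    · funext p
      rcases p with q | p
      · show (ψ₁ v).1 q = (ψ₁ u).1 q
          - NS.PRE (Multiset.map bar α + β) (Sum.inl q)
          + NS.POST (Multiset.map bar α + β) (Sum.inl q)
        rw [PREinl α β hαT hβT q, POSTinl α β hαT hβT q]
        have e1 : (ψ₁ u).1 q = (ψ₁ s).1 q - N₁.PRE α q + N₁.POST α q :=
          congrFun hfir2 q
        have e2 : N₁.PRE α q ≤ (ψ₁ s).1 q := hen2.2 q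
        have e3 : N₁.PRE α q + N₁.PRE β q ≤ (ψ₁ s).1 q := by
          have := hen1.2 q; rwa [PRE_add] at this
        have e4 : (ψ₁ v).1 q = (ψ₁ s).1 q - N₁.PRE β q + N₁.POST β q :=
          congrFun hfir3 q
        omega
      · show ψ₂ v p = ψ₂ u p
          - NS.PRE (Multiset.map bar α + β) (Sum.inr p)
          + NS.POST (Multiset.map bar α + β) (Sum.inr p)
        rw [PREinr α β hαT hβT p, POSTinr α β hαT hβT p]
        have e1 : ψ₂ u p = ψ₂ w p - W.PRE (Multiset.map bar β) p
            + W.POST (Multiset.map bar β) p := congrFun hfirW2 p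
        have e2 : W.PRE (Multiset.map bar β) p ≤ ψ₂ w p := henW2.2 p
        have e3 : W.PRE (Multiset.map bar α) p + W.PRE (Multiset.map bar β) p
            ≤ ψ₂ w p := by
          have := henW1.2 p; rwa [Multiset.map_add, PRE_add] at this
        have e4 : ψ₂ v p = ψ₂ w p - W.PRE (Multiset.map bar α) p
            + W.POST (Multiset.map bar α) p := congrFun hfirW3 p
        have e5 : W.PRE (Multiset.map bar α) p ≤ ψ₂ w p := henW3.2 p
        omega
  -- the backward characterization
  have C2 : ∀ (u : S) (γ : Multiset A), NS.Enabled (μ u) γ →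
      ∃ v, (X.mixrevSTS bar).tr u γ v ∧ μ v = NS.fire (μ u) γ := by
    intro u γ hen
    obtain ⟨hlab, hpre⟩ := hen
    -- split γ into a T-part and a barred part
    set β : Multiset A := γ.filter (· ∈ X.T) with hβdef
    set γ₁ : Multiset A := γ.filter (fun c => ¬ c ∈ X.T) with hγ₁def
    have hsplit : β + γ₁ = γ := Multiset.filter_add_not _ γ
    have hβT : ∀ b ∈ β, b ∈ X.T := fun b hb => (Multiset.mem_filter.mp hb).2
    have hγ₁bar : ∀ c ∈ γ₁, ∃ b ∈ X.T, bar b = c := by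
      intro c hc
      have hcγ : c ∈ γ := Multiset.mem_of_mem_filter hc
      have hcn : ¬ c ∈ X.T := (Multiset.mem_filter.mp hc).2
      rcases Finset.mem_union.mp (hlab c hcγ) with h | h
      · exact absurd h hcn
      · exact Finset.mem_image.mp h
    set α : Multiset A := γ₁.map ib with hαdef
    have hαT : ∀ a ∈ α, a ∈ X.T := by
      intro a ha
      obtain ⟨c, hc, hca⟩ := Multiset.mem_map.mp ha
      obtain ⟨b, hb, hbc⟩ := hγ₁bar c hc
      rw [← hca, ← hbc, hib b hb]
      exact hb
    have hmapbar : Multiset.map bar α = γ₁ := by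
      rw [hαdef, Multiset.map_map]
      have : ∀ c ∈ γ₁, (bar ∘ ib) c = id c := by
        intro c hc
        obtain ⟨b, hb, hbc⟩ := hγ₁bar c hc
        simp only [Function.comp_apply, id_eq, ← hbc, hib b hb]
      rw [Multiset.map_congr rfl this, Multiset.map_id]
    have hγeq : γ = Multiset.map bar α + β := by
      rw [hmapbar, add_comm, hsplit]
    -- reverse the bar part through U
    have henW : W.Enabled (ψ₂ u) (Multiset.map bar α) := by
      constructor
      · intro c hc
        obtain ⟨a, ha, hac⟩ := Multiset.mem_map.mp hc
        have hc' : c ∈ U.T := by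
          rw [← hUT, ← hac]
          exact Finset.mem_image_of_mem bar (hαT a ha)
        exact hc'
      · intro p
        have h5 := hpre (Sum.inr p)
        rw [hγeq, PREinr α β hαT hβT p] at h5
        have hμu : μ u (Sum.inr p) = ψ₂ u p := rfl
        omega
    obtain ⟨s, α', hγα', hsu, hψs⟩ := L2 u (Multiset.map bar α) henW
    have hα'eq : α = α' := map_bar_cancel hg.1 α α' hαT
      (fun a ha => hLab _ _ _ hsu a ha) hγα'
    subst hα'eq
    -- fire α + β forward from s in N₁
    obtain ⟨henα, hfirα⟩ := (htr₁ s α u).mp hsu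
    have henN₁ : N₁.Enabled (ψ₁ s).1 (α + β) := by
      constructor
      · intro a ha
        rcases Multiset.mem_add.mp ha with h | h
        · exact hT₁' ▸ hαT a h
        · exact hT₁' ▸ hβT a h
      · intro q
        rw [PRE_add]
        have e1 : (ψ₁ u).1 q = (ψ₁ s).1 q - N₁.PRE α q + N₁.POST α q :=
          congrFun hfirα q
        have e2 : N₁.PRE α q ≤ (ψ₁ s).1 q := henα.2 q
        have e3 : NS.PRE γ (Sum.inl q) ≤ μ u (Sum.inl q) := hpre (Sum.inl q)
        rw [hγeq, PREinl α β hαT hβT q] at e3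
        have e4 : μ u (Sum.inl q) = (ψ₁ u).1 q := rfl
        omega
    obtain ⟨w, hw⟩ := L4 s (α + β) henN₁
    have hw' : X.tr s (β + α) w := by rwa [add_comm]
    obtain ⟨v, hv, -⟩ := hSEQ s β α ⟨w, hw'⟩
    have hm : (X.mixrevSTS bar).tr u γ v := ⟨s, α, β, hγeq, ⟨w, hw⟩, hsu, hv⟩
    exact ⟨v, hm, (C1 hm).2⟩
  -- reachability correspondence
  have R1 : ∀ s, NS.Reach (μ s) := by
    intro s
    induction hREA s with
    | refl => exact PTNet.Reach.init
    | @step r s' χ hr htr' ih =>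
      obtain ⟨hen, hfir⟩ := C1 (tr_mixrev hEL htr' (bar := bar))
      rw [hfir]
      exact PTNet.Reach.step ih hen
  have R2 : ∀ M, NS.Reach M → ∃ s, μ s = M := by
    intro M hM
    induction hM with
    | init => exact ⟨X.init, rfl⟩
    | @step M γ hr hen ih =>
      obtain ⟨s, hs⟩ := ih
      subst hs
      obtain ⟨v, hv, hfir⟩ := C2 s γ hen
      exact ⟨v, hfir⟩
  -- assemble the isomorphism
  have hbij : Function.Bijective
      (fun s : S => (⟨μ s, R1 s⟩ : {M // NS.Reach M})) := by
    constructor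
    · intro s s' hss
      exact μinj (congrArg Subtype.val hss)
    · rintro ⟨M, hM⟩
      obtain ⟨s, hs⟩ := R2 M hM
      exact ⟨s, Subtype.ext hs⟩
  have hiso : STS.IsoSTS (X.mixrevSTS bar) (CRG NS) := by
    refine ⟨Equiv.ofBijective _ hbij, Subtype.ext rfl, rfl, ?_⟩
    intro u γ v
    constructor
    · intro hm
      exact C1 hm
    · rintro ⟨hen, hfir⟩
      have hen' : NS.Enabled (μ u) γ := hen
      have hfir2 : μ v = NS.fire (μ u) γ := hfir
      obtain ⟨v', hv', hfir'⟩ := C2 u γ hen'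
      have hvv : μ v' = μ v := by rw [hfir', hfir2]
      rwa [μinj hvv] at hv'
  obtain ⟨NS', hiso'⟩ := crg_transport (finSumFinEquiv (m := n₁) (n := n₂)) NS
  exact ⟨n₁ + n₂, NS', isoSTS_trans hiso hiso'⟩

end Stmt12Aux

/-- `TS^mixrev` is solvable iff both `TS` and the reversed system `TS̄` (with
multiple initial states given by a home cover `R`) are solvable. -/
theorem stmt12 {S A : Type*} [DecidableEq A] (X : STS S A) (bar : A → A)
    (hX : X.IsCEST) (hg : X.GoodRev bar)
    (R : Set S) (hR : ∀ s, ∃ r ∈ R, X.ReachFrom s r) :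
    STSSolvable (X.mixrevSTS bar) ↔
      (STSSolvable X ∧ RevMultiSolvable X bar R) := by
  constructor
  · exact fun h => Stmt12Aux.forward_dir X bar hX hg R hR h
  · rintro ⟨h1, h2⟩
    exact Stmt12Aux.backward_dir X bar hX hg R hR h1 h2
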